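/- Let R be an expansive integer ν×ν matrix, B, L ⊂ ℝ^ν finite with 0 ∈ B ∩ L, #B = #L = N, L ⊂ ℤ^ν, R(B) ⊂ ℤ^ν, and suppose the N×N matrix H = N^{-1/2}(e^{2πi b·l})_{b∈B, l∈L} is unitary. Let μ be the self-affine measure satisfying μ = N^{-1} Σ_{b∈B} μ∘σ_b^{-1} with σ_b(x) = R^{-1}x + b, and let P = { l₀ + R*l₁ + R*²l₂ + ⋯ : lᵢ ∈ L, finite sums }. Then the exponentials {e_λ : λ ∈ P} are mutually orthogonal in L²(μ). -/

import Mathlib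

open MeasureTheory
open Matrix

noncomputable def Eexp (c : ℝ) : ℂ := Complex.exp (((2 * Real.pi * c : ℝ) : ℂ) * Complex.I)

lemma Eexp_add (a b : ℝ) : Eexp (a + b) = Eexp a * Eexp b := by
  rw [Eexp, Eexp, Eexp, ← Complex.exp_add]; congr 1; push_cast; ring

lemma Eexp_int (k : ℤ) : Eexp (k : ℝ) = 1 := by
  have := Complex.exp_int_mul_two_pi_mul_I k
  rw [Eexp, ← this]; congr 1; push_cast; ring

lemma norm_Eexp (c : ℝ) : ‖Eexp c‖ = 1 := by
  simp [Eexp, Complex.norm_exp]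

lemma continuous_Eexp {α : Type*} [TopologicalSpace α] {c : α → ℝ} (hc : Continuous c) :
    Continuous (fun x => Eexp (c x)) := by
  unfold Eexp
  exact Complex.continuous_exp.comp ((Complex.continuous_ofReal.comp (by fun_prop)).mul
    continuous_const)

lemma integrable_Eexp {α : Type*} [MeasurableSpace α] [TopologicalSpace α]
    [OpensMeasurableSpace α] (μ' : Measure α) [IsFiniteMeasure μ'] {c : α → ℝ}
    (hc : Continuous c) : Integrable (fun x => Eexp (c x)) μ' := by
  refine ⟨(continuous_Eexp hc).aestronglyMeasurable, ?_⟩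
  refine HasFiniteIntegral.of_bounded (C := 1) ?_
  filter_upwards with x
  exact le_of_eq (norm_Eexp _)

lemma continuous_dot {ν : ℕ} (t : Fin ν → ℝ) :
    Continuous (fun x : Fin ν → ℝ => dotProduct t x) := by
  unfold dotProduct
  exact continuous_finset_sum _ fun i _ => (continuous_const.mul (continuous_apply i))

lemma continuous_affine {ν : ℕ} (M : Matrix (Fin ν) (Fin ν) ℝ) (b : Fin ν → ℝ) :
    Continuous (fun x : Fin ν → ℝ => M.mulVec x + b) := by
  have h1 : Continuous (fun x : Fin ν → ℝ => M.mulVec x) := by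
    refine continuous_pi fun i => ?_
    simp only [Matrix.mulVec, dotProduct]
    exact continuous_finset_sum _ fun j _ => (continuous_const.mul (continuous_apply j))
  exact h1.add continuous_const

def IntVec {ν : ℕ} (v : Fin ν → ℝ) : Prop := ∀ i, ∃ k : ℤ, v i = k

lemma IntVec.zero {ν : ℕ} : IntVec (0 : Fin ν → ℝ) := fun i => ⟨0, by simp⟩

lemma IntVec.add {ν : ℕ} {v w : Fin ν → ℝ} (hv : IntVec v) (hw : IntVec w) :
    IntVec (v + w) := by
  intro i
  obtain ⟨a, ha⟩ := hv i; obtain ⟨b, hb⟩ := hw i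
  exact ⟨a + b, by simp [ha, hb]⟩

lemma IntVec.sub {ν : ℕ} {v w : Fin ν → ℝ} (hv : IntVec v) (hw : IntVec w) :
    IntVec (v - w) := by
  intro i
  obtain ⟨a, ha⟩ := hv i; obtain ⟨b, hb⟩ := hw i
  exact ⟨a - b, by simp [ha, hb]⟩

lemma IntVec.dot {ν : ℕ} {v w : Fin ν → ℝ} (hv : IntVec v) (hw : IntVec w) :
    ∃ k : ℤ, dotProduct v w = (k : ℝ) := by
  choose f hf using hv
  choose g hg using hw
  refine ⟨∑ i, f i * g i, ?_⟩
  rw [dotProduct]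
  push_cast
  exact Finset.sum_congr rfl fun i _ => by rw [hf, hg]

lemma IntVec.mulVec {ν : ℕ} {M : Matrix (Fin ν) (Fin ν) ℝ}
    (hM : ∀ i j, ∃ k : ℤ, M i j = (k : ℝ)) {v : Fin ν → ℝ} (hv : IntVec v) :
    IntVec (M.mulVec v) := fun i => IntVec.dot (fun j => hM i j) hv

lemma IntVec.pow_mulVec {ν : ℕ} {M : Matrix (Fin ν) (Fin ν) ℝ}
    (hM : ∀ i j, ∃ k : ℤ, M i j = (k : ℝ)) {v : Fin ν → ℝ} (hv : IntVec v) (n : ℕ) :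
    IntVec ((M ^ n).mulVec v) := by
  induction n with
  | zero => simpa [Matrix.one_mulVec] using hv
  | succ n ih =>
    rw [pow_succ', ← Matrix.mulVec_mulVec]
    exact IntVec.mulVec hM ih

lemma funeq {ν N : ℕ} (M : Matrix (Fin ν) (Fin ν) ℝ)
    (B : Finset (Fin ν → ℝ))
    (μ : Measure (Fin ν → ℝ)) [IsProbabilityMeasure μ]
    (hself : μ = (N : ENNReal)⁻¹ • ∑ b ∈ B, μ.map (fun x => M⁻¹.mulVec x + b))
    (t : Fin ν → ℝ) :
    (∫ x, Eexp (dotProduct t x) ∂μ) =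
      (N : ℝ)⁻¹ • ((∑ b ∈ B, Eexp (dotProduct t b)) *
        ∫ x, Eexp (dotProduct ((Mᵀ)⁻¹.mulVec t) x) ∂μ) := by
  have hg : ∀ b : Fin ν → ℝ, Measurable (fun x : Fin ν → ℝ => M⁻¹.mulVec x + b) :=
    fun b => (continuous_affine M⁻¹ b).measurable
  conv_lhs => rw [hself]
  rw [integral_smul_measure]
  have hmaps : ∀ b ∈ B, Integrable (fun x => Eexp (dotProduct t x))
      (μ.map (fun x : Fin ν → ℝ => M⁻¹.mulVec x + b)) := by
    intro b _
    haveI : IsProbabilityMeasure (μ.map (fun x : Fin ν → ℝ => M⁻¹.mulVec x + b)) :=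
      Measure.isProbabilityMeasure_map (hg b).aemeasurable
    exact integrable_Eexp _ (continuous_dot t)
  rw [integral_finset_sum_measure hmaps]
  have hpt : ∀ b, ∀ x : Fin ν → ℝ, dotProduct t (M⁻¹.mulVec x + b) =
      dotProduct t b + dotProduct ((Mᵀ)⁻¹.mulVec t) x := by
    intro b x
    rw [dotProduct_add, Matrix.dotProduct_mulVec, ← Matrix.mulVec_transpose,
      Matrix.transpose_nonsing_inv]
    ring
  have hterm : ∀ b ∈ B, ∫ x, Eexp (dotProduct t x)
        ∂(μ.map (fun x : Fin ν → ℝ => M⁻¹.mulVec x + b)) =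
      Eexp (dotProduct t b) *
        ∫ x, Eexp (dotProduct ((Mᵀ)⁻¹.mulVec t) x) ∂μ := by
    intro b _
    rw [integral_map (hg b).aemeasurable (continuous_Eexp (continuous_dot t)).aestronglyMeasurable]
    simp_rw [hpt b, Eexp_add]
    rw [integral_const_mul]
  rw [Finset.sum_congr rfl hterm, ← Finset.sum_mul]
  congr 1
  simp

lemma mulVec_finset_sum {ν : ℕ} (A : Matrix (Fin ν) (Fin ν) ℝ) (s : Finset ℕ)
    (f : ℕ → Fin ν → ℝ) : A.mulVec (∑ i ∈ s, f i) = ∑ i ∈ s, A.mulVec (f i) := by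
  induction s using Finset.cons_induction with
  | empty => simp [Matrix.mulVec_zero]
  | cons a s ha ih => rw [Finset.sum_cons, Finset.sum_cons, Matrix.mulVec_add, ih]

lemma key_lemma {ν N : ℕ} (M : Matrix (Fin ν) (Fin ν) ℝ)
    (hMint : ∀ i j, ∃ k : ℤ, M i j = (k : ℝ))
    (hdet : IsUnit M.det)
    (B L : Finset (Fin ν → ℝ))
    (hLint : ∀ l ∈ L, IntVec l)
    (hBM : ∀ b ∈ B, IntVec (M.mulVec b))
    (hH : ∀ l ∈ L, ∀ l' ∈ L, l ≠ l' →
      ∑ b ∈ B, Eexp (dotProduct b (l - l')) = 0)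
    (μ : Measure (Fin ν → ℝ)) [IsProbabilityMeasure μ]
    (hself : μ = (N : ENNReal)⁻¹ • ∑ b ∈ B, μ.map (fun x => M⁻¹.mulVec x + b)) :
    ∀ m : ℕ, ∀ l l' : ℕ → (Fin ν → ℝ), (∀ i, l i ∈ L) → (∀ i, l' i ∈ L) →
      (∑ i ∈ Finset.range m, (Mᵀ ^ i).mulVec (l' i - l i)) ≠ 0 →
      ∫ x, Eexp (dotProduct
        (∑ i ∈ Finset.range m, (Mᵀ ^ i).mulVec (l' i - l i)) x) ∂μ = 0 := by
  have hMt : ∀ i j, ∃ k : ℤ, Mᵀ i j = (k : ℝ) := fun i j => hMint j i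
  have hdetT : IsUnit Mᵀ.det := by rwa [Matrix.det_transpose]
  intro m
  induction m with
  | zero => intro l l' _ _ hne; simp at hne
  | succ m ih =>
    intro l l' hl hl' hne
    set s : Fin ν → ℝ := ∑ i ∈ Finset.range m, (Mᵀ ^ i).mulVec (l' (i+1) - l (i+1)) with hs
    set t : Fin ν → ℝ := ∑ i ∈ Finset.range (m+1), (Mᵀ ^ i).mulVec (l' i - l i) with ht
    have hts : t = (l' 0 - l 0) + Mᵀ.mulVec s := by
      rw [ht, Finset.sum_range_succ', pow_zero, Matrix.one_mulVec, add_comm]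
      congr 1
      rw [hs, mulVec_finset_sum]
      exact Finset.sum_congr rfl fun i _ => by
        rw [Matrix.mulVec_mulVec, ← pow_succ']
    have hsint : IntVec s := by
      rw [hs]
      refine Finset.sum_induction _ IntVec (fun a b => IntVec.add) IntVec.zero ?_
      intro i _
      exact IntVec.pow_mulVec hMt ((hLint _ (hl' (i+1))).sub (hLint _ (hl (i+1)))) i
    -- χ factor: for each b, Eexp (t ⬝ᵥ b) = Eexp ((l' 0 - l 0) ⬝ᵥ b)
    have hchi : ∀ b ∈ B, Eexp (dotProduct t b) =
        Eexp (dotProduct (l' 0 - l 0) b) := by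
      intro b hb
      rw [hts, add_dotProduct, Eexp_add]
      have : dotProduct (Mᵀ.mulVec s) b = dotProduct s (M.mulVec b) := by
        rw [Matrix.mulVec_transpose, ← Matrix.dotProduct_mulVec]
      obtain ⟨k, hk⟩ := hsint.dot (hBM b hb)
      rw [this, hk, Eexp_int, mul_one]
    rw [funeq M B μ hself t]
    by_cases h0 : l 0 = l' 0
    · -- χ = N (irrelevant); inner integral is F s = 0
      have hts' : t = Mᵀ.mulVec s := by rw [hts, h0, sub_self, zero_add]
      have hsne : s ≠ 0 := by
        intro h
        apply hne
        rw [hts', h, Matrix.mulVec_zero]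
      have hinv : (Mᵀ)⁻¹.mulVec t = s := by
        rw [hts', Matrix.mulVec_mulVec, Matrix.nonsing_inv_mul _ hdetT, Matrix.one_mulVec]
      rw [hinv, ih _ _ (fun i => hl (i+1)) (fun i => hl' (i+1)) (by rwa [← hs])]
      simp
    · -- χ = 0
      have : ∑ b ∈ B, Eexp (dotProduct t b) = 0 := by
        rw [Finset.sum_congr rfl hchi]
        have := hH (l' 0) (hl' 0) (l 0) (hl 0) (fun h => h0 h.symm)
        simpa [dotProduct_comm] using this
      rw [this, zero_mul, smul_zero]




/-- The spectrum candidate `P(L) = { l₀ + R*l₁ + R*²l₂ + ⋯ : lᵢ ∈ L, finite sums }`,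
where `R*` is the transpose of `R`. -/
def PsetL {ν : ℕ} (Rt : Matrix (Fin ν) (Fin ν) ℝ) (L : Finset (Fin ν → ℝ)) :
    Set (Fin ν → ℝ) :=
  {lam | ∃ (n : ℕ) (l : ℕ → (Fin ν → ℝ)), (∀ i, l i ∈ L) ∧
    lam = ∑ i ∈ Finset.range n, (Rt ^ i).mulVec (l i)}

theorem exponentials_orthogonal_selfaffine {ν N : ℕ}
    (R : Matrix (Fin ν) (Fin ν) ℤ)
    (hexp : ∀ ξ : ℂ, ((R.map (fun n : ℤ => (n : ℂ))).charpoly).IsRoot ξ → 1 < ‖ξ‖)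
    (B L : Finset (Fin ν → ℝ))
    (hB : B.card = N) (hL : L.card = N)
    (h0B : (0 : Fin ν → ℝ) ∈ B) (h0L : (0 : Fin ν → ℝ) ∈ L)
    (hLint : ∀ l ∈ L, ∀ i, ∃ k : ℤ, l i = (k : ℝ))
    (hRBint : ∀ b ∈ B, ∀ i, ∃ k : ℤ, (R.map (fun n : ℤ => (n : ℝ))).mulVec b i = (k : ℝ))
    (hH : ∀ l ∈ L, ∀ l' ∈ L, l ≠ l' →
      ∑ b ∈ B,
        Complex.exp ((((2 : ℝ) * Real.pi * ∑ i, b i * (l i - l' i) : ℝ) : ℂ) * Complex.I) = 0)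
    (μ : Measure (Fin ν → ℝ)) [IsProbabilityMeasure μ]
    (hK : ∃ K : Set (Fin ν → ℝ), IsCompact K ∧ μ Kᶜ = 0)
    (hself : μ = (N : ENNReal)⁻¹ •
      ∑ b ∈ B, μ.map (fun x => (R.map (fun n : ℤ => (n : ℝ)))⁻¹.mulVec x + b)) :
    ∀ lam ∈ PsetL ((R.map (fun n : ℤ => (n : ℝ))).transpose) L,
      ∀ lam' ∈ PsetL ((R.map (fun n : ℤ => (n : ℝ))).transpose) L, lam ≠ lam' →
      ∫ x, Complex.exp
          ((((2 : ℝ) * Real.pi * ∑ i, (lam' i - lam i) * x i : ℝ) : ℂ) * Complex.I) ∂μ = 0 := by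
  intro lam hlam lam' hlam' hne
  set M := R.map (fun n : ℤ => (n : ℝ)) with hM
  have hdet : IsUnit M.det := by
    have hdet0 : R.det ≠ 0 := by
      intro h
      have hdc : (R.map (fun n : ℤ => (n : ℂ))).det = 0 := by
        rw [show (R.map (fun n : ℤ => (n : ℂ))) = (Int.castRingHom ℂ).mapMatrix R from rfl,
          ← RingHom.map_det]
        simp [h]
      have h0 : ((R.map (fun n : ℤ => (n : ℂ))).charpoly).IsRoot 0 := by
        have hsc := Matrix.det_eq_sign_charpoly_coeff (R.map (fun n : ℤ => (n : ℂ)))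
        rw [hdc] at hsc
        have hc : ((R.map (fun n : ℤ => (n : ℂ))).charpoly).coeff 0 = 0 := by
          rcases mul_eq_zero.mp hsc.symm with h' | h'
          · exact absurd h' (pow_ne_zero _ (by norm_num))
          · exact h'
        rwa [Polynomial.IsRoot, ← Polynomial.coeff_zero_eq_eval_zero]
      have := hexp 0 h0
      norm_num at this
    have : M.det = (R.det : ℝ) := by
      rw [hM, show (R.map (fun n : ℤ => (n : ℝ))) = (Int.castRingHom ℝ).mapMatrix R from rfl,
        ← RingHom.map_det]
      rfl
    rw [this]
    simpa using hdet0
  have hMint : ∀ i j, ∃ k : ℤ, M i j = (k : ℝ) := fun i j => ⟨R i j, rfl⟩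
  have hLint' : ∀ l ∈ L, IntVec l := hLint
  have hBM : ∀ b ∈ B, IntVec (M.mulVec b) := hRBint
  have hH' : ∀ l ∈ L, ∀ l' ∈ L, l ≠ l' →
      ∑ b ∈ B, Eexp (dotProduct b (l - l')) = 0 := hH
  obtain ⟨n, l, hl, hleq⟩ := hlam
  obtain ⟨n', l'', hl'', hl'eq⟩ := hlam'
  set m := max n n' with hm
  set lt : ℕ → (Fin ν → ℝ) := fun i => if i < n then l i else 0 with hltdef
  set lt' : ℕ → (Fin ν → ℝ) := fun i => if i < n' then l'' i else 0 with hlt'def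
  have hlt : ∀ i, lt i ∈ L := by
    intro i; rw [hltdef]; dsimp only; split
    · exact hl i
    · exact h0L
  have hlt' : ∀ i, lt' i ∈ L := by
    intro i; rw [hlt'def]; dsimp only; split
    · exact hl'' i
    · exact h0L
  have hsum : lam = ∑ i ∈ Finset.range m, (Mᵀ ^ i).mulVec (lt i) := by
    rw [hleq]
    rw [← Finset.sum_subset (Finset.range_subset_range.mpr (le_max_left n n'))
      (fun i _ hi => by
        rw [hltdef]; dsimp only
        rw [if_neg (by simpa using hi), Matrix.mulVec_zero])]
    exact Finset.sum_congr rfl fun i hi => by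
      rw [hltdef]; dsimp only
      rw [if_pos (Finset.mem_range.mp hi)]
  have hsum' : lam' = ∑ i ∈ Finset.range m, (Mᵀ ^ i).mulVec (lt' i) := by
    rw [hl'eq]
    rw [← Finset.sum_subset (Finset.range_subset_range.mpr (le_max_right n n'))
      (fun i _ hi => by
        rw [hlt'def]; dsimp only
        rw [if_neg (by simpa using hi), Matrix.mulVec_zero])]
    exact Finset.sum_congr rfl fun i hi => by
      rw [hlt'def]; dsimp only
      rw [if_pos (Finset.mem_range.mp hi)]
  have hdiff : lam' - lam = ∑ i ∈ Finset.range m, (Mᵀ ^ i).mulVec (lt' i - lt i) := by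
    rw [hsum, hsum', ← Finset.sum_sub_distrib]
    exact Finset.sum_congr rfl fun i _ => (Matrix.mulVec_sub _ _ _).symm
  have hne' : (∑ i ∈ Finset.range m, (Mᵀ ^ i).mulVec (lt' i - lt i)) ≠ 0 := by
    rw [← hdiff]
    exact sub_ne_zero_of_ne (Ne.symm hne)
  have hkey := key_lemma (N := N) M hMint hdet B L hLint' hBM hH' μ hself m lt lt' hlt hlt' hne'
  rw [← hdiff] at hkey
  exact hkey
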